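/- Let I ⊆ ℤ² be a finite spread. Define ∂⁻I = {a ∈ I : a - (1,1) ∉ I}. Then ∂⁻I is poset-connected in ℤ². -/

import Mathlib

/-- A subset of a poset is poset-convex. -/
def PosetConvex {α : Type*} [Preorder α] (S : Set α) : Prop :=
  ∀ ⦃x y z : α⦄, x ≤ y → y ≤ z → x ∈ S → z ∈ S → y ∈ S

/-- A subset of a poset is poset-connected: nonempty, and any two of its elements are
joined by a finite zigzag of comparable elements staying in the set. -/
def PosetConnected {α : Type*} [Preorder α] (S : Set α) : Prop :=
  S.Nonempty ∧ ∀ x ∈ S, ∀ y ∈ S, ∃ (n : ℕ) (c : ℕ → α), c 0 = x ∧ c n = y ∧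
    (∀ i ≤ n, c i ∈ S) ∧ ∀ i < n, c i ≤ c (i + 1) ∨ c (i + 1) ≤ c i

/-- Auxiliary relation: joined by a zigzag inside `S`. -/
def ZChain {α : Type*} [Preorder α] (S : Set α) (x y : α) : Prop :=
  ∃ (n : ℕ) (c : ℕ → α), c 0 = x ∧ c n = y ∧
    (∀ i ≤ n, c i ∈ S) ∧ ∀ i < n, c i ≤ c (i + 1) ∨ c (i + 1) ≤ c i

lemma zchain_refl {α : Type*} [Preorder α] {S : Set α} {x : α} (hx : x ∈ S) :
    ZChain S x x :=
  ⟨0, fun _ => x, rfl, rfl, fun _ _ => hx, fun i hi => by omega⟩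

lemma zchain_single {α : Type*} [Preorder α] {S : Set α} {x y : α}
    (hx : x ∈ S) (hy : y ∈ S) (h : x ≤ y ∨ y ≤ x) : ZChain S x y := by
  refine ⟨1, fun i => if i = 0 then x else y, by simp, by simp, ?_, ?_⟩
  · intro i _
    by_cases h0 : i = 0 <;> simp [h0, hx, hy]
  · intro i hi
    have : i = 0 := by omega
    simpa [this] using h

lemma zchain_symm {α : Type*} [Preorder α] {S : Set α} {x y : α}
    (h : ZChain S x y) : ZChain S y x := by
  obtain ⟨n, c, h0, hn, hmem, hcomp⟩ := h
  refine ⟨n, fun i => c (n - i), by simpa, by simpa, ?_, ?_⟩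
  · intro i hi; exact hmem _ (by omega)
  · intro i hi
    have h1 : n - i = (n - (i + 1)) + 1 := by omega
    rcases hcomp (n - (i + 1)) (by omega) with h' | h'
    · right; show c (n - (i + 1)) ≤ c (n - i); rw [h1]; exact h'
    · left; show c (n - i) ≤ c (n - (i + 1)); rw [h1]; exact h'

lemma zchain_trans {α : Type*} [Preorder α] {S : Set α} {x y z : α}
    (h1 : ZChain S x y) (h2 : ZChain S y z) : ZChain S x z := by
  obtain ⟨n, c, hc0, hcn, hcmem, hccomp⟩ := h1
  obtain ⟨m, d, hd0, hdm, hdmem, hdcomp⟩ := h2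
  refine ⟨n + m, fun i => if i ≤ n then c i else d (i - n), by simp [hc0], ?_, ?_, ?_⟩
  · by_cases hm : m = 0
    · simp [hm, hcn, hd0 ▸ (hm ▸ hdm : d 0 = z)]
    · have : ¬ (n + m ≤ n) := by omega
      simp [this, hdm]
  · intro i hi
    by_cases h : i ≤ n
    · simp only [h, if_pos]; exact hcmem i h
    · simp only [h, if_neg, if_false]; exact hdmem (i - n) (by omega)
  · intro i hi
    by_cases h : i + 1 ≤ n
    · have h' : i ≤ n := by omega
      simpa [h, h'] using hccomp i (by omega)
    · by_cases h' : i ≤ n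
      · have hin : i = n := by omega
        have e1 : d (i + 1 - n) = d 1 := by rw [hin]; norm_num
        have e2 : c i = d 0 := by rw [hin, hcn, ← hd0]
        simpa [h, h', e1, e2] using hdcomp 0 (by omega)
      · have e : i + 1 - n = (i - n) + 1 := by omega
        simpa [h, h', e] using hdcomp (i - n) (by omega)

open Classical in
/-- The diagonal foot of a point: descend along `-(1,1)` until just before leaving `I`. -/
noncomputable def ftAux (I : Set (ℤ × ℤ))
    (hex : ∀ a : ℤ × ℤ, ∃ k : ℕ, ((a.1 - (k + 1), a.2 - (k + 1)) : ℤ × ℤ) ∉ I)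
    (a : ℤ × ℤ) : ℤ × ℤ :=
  (a.1 - Nat.find (hex a), a.2 - Nat.find (hex a))

theorem stmt6 (I : Set (ℤ × ℤ)) (hfin : I.Finite)
    (hconv : PosetConvex I) (hconn : PosetConnected I) :
    PosetConnected {a : ℤ × ℤ | a ∈ I ∧ a - (1, 1) ∉ I} := by
  classical
  set B : Set (ℤ × ℤ) := {a : ℤ × ℤ | a ∈ I ∧ a - (1, 1) ∉ I} with hB
  have hex : ∀ a : ℤ × ℤ, ∃ k : ℕ, ((a.1 - (k + 1), a.2 - (k + 1)) : ℤ × ℤ) ∉ I := by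
    intro a
    by_contra h
    push_neg at h
    have hinf : I.Infinite := by
      refine Set.infinite_of_injective_forall_mem
        (f := fun k : ℕ => ((a.1 - (k + 1), a.2 - (k + 1)) : ℤ × ℤ)) ?_ h
      intro k1 k2 hk
      simp only [Prod.mk.injEq] at hk
      omega
    exact hinf hfin
  set ft : ℤ × ℤ → ℤ × ℤ := ftAux I hex with hft
  -- basic facts about ft
  have hsub : ∀ a : ℤ × ℤ, ft a - (1, 1) = (a.1 - (Nat.find (hex a) + 1), a.2 - (Nat.find (hex a) + 1)) := by
    intro a
    simp only [hft, ftAux, Prod.mk_sub_mk, Prod.mk.injEq]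
    constructor <;> ring
  have hftnot : ∀ a : ℤ × ℤ, ft a - (1, 1) ∉ I := by
    intro a
    rw [hsub]
    exact Nat.find_spec (hex a)
  have hftmem : ∀ a : ℤ × ℤ, a ∈ I → ft a ∈ I := by
    intro a ha
    rcases Nat.eq_zero_or_pos (Nat.find (hex a)) with h0 | hpos
    · simp only [hft, ftAux, h0]
      simpa using ha
    · have hmin := Nat.find_min (hex a) (show Nat.find (hex a) - 1 < Nat.find (hex a) by omega)
      rw [not_not] at hmin
      have hcast : ((Nat.find (hex a) - 1 : ℕ) : ℤ) + 1 = (Nat.find (hex a) : ℤ) := by omega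
      rw [hcast] at hmin
      simpa only [hft, ftAux] using hmin
  have hftB : ∀ a : ℤ × ℤ, a ∈ I → ft a ∈ B := by
    intro a ha
    exact ⟨hftmem a ha, hftnot a⟩
  have hfix : ∀ a : ℤ × ℤ, a ∈ B → ft a = a := by
    intro a ha
    have h0 : Nat.find (hex a) = 0 := by
      rw [Nat.find_eq_zero]
      simp only [Nat.cast_zero, zero_add]
      have e : a - (1, 1) = ((a.1 - 1, a.2 - 1) : ℤ × ℤ) := by
        simp [Prod.ext_iff]
      rw [← e]
      exact ha.2
    simp [hft, ftAux, h0]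
  -- feet of adjacent points are comparable
  have hcompat : ∀ a b : ℤ × ℤ,
      ((b.1 = a.1 + 1 ∧ b.2 = a.2) ∨ (b.1 = a.1 ∧ b.2 = a.2 + 1)) →
      ft a ≤ ft b ∨ ft b ≤ ft a := by
    intro a b h
    simp only [hft, ftAux, Prod.le_def] at *
    omega
  -- main step lemma: feet of comparable points of I are zigzag-connected in B
  have main : ∀ N : ℕ, ∀ a b : ℤ × ℤ, a ∈ I → b ∈ I → a ≤ b →
      b.1 - a.1 + (b.2 - a.2) = N → ZChain B (ft a) (ft b) := by
    intro N
    induction N with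
    | zero =>
      intro a b ha hb hab hN
      rw [Prod.le_def] at hab
      have : a = b := by
        rw [Prod.ext_iff]
        push_cast at hN
        omega
      rw [this]
      exact zchain_refl (hftB b hb)
    | succ N ih =>
      intro a b ha hb hab hN
      rw [Prod.le_def] at hab
      push_cast at hN
      by_cases hx : a.1 < b.1
      · set a' : ℤ × ℤ := (a.1 + 1, a.2) with ha'
        have ha'I : a' ∈ I := hconv (show a ≤ a' by rw [Prod.le_def]; simp [ha'])
          (show a' ≤ b by rw [Prod.le_def]; constructor <;> simp [ha'] <;> omega) ha hb
        have step : ZChain B (ft a) (ft a') :=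
          zchain_single (hftB a ha) (hftB a' ha'I) (hcompat a a' (by simp [ha']))
        have rest : ZChain B (ft a') (ft b) := by
          apply ih a' b ha'I hb
          · rw [Prod.le_def]; constructor <;> simp [ha'] <;> omega
          · simp only [ha']; omega
        exact zchain_trans step rest
      · have hy : a.2 < b.2 := by omega
        set a' : ℤ × ℤ := (a.1, a.2 + 1) with ha'
        have ha'I : a' ∈ I := hconv (show a ≤ a' by rw [Prod.le_def]; simp [ha'])
          (show a' ≤ b by rw [Prod.le_def]; constructor <;> simp [ha'] <;> omega) ha hb
        have step : ZChain B (ft a) (ft a') :=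
          zchain_single (hftB a ha) (hftB a' ha'I) (hcompat a a' (by simp [ha']))
        have rest : ZChain B (ft a') (ft b) := by
          apply ih a' b ha'I hb
          · rw [Prod.le_def]; constructor <;> simp [ha'] <;> omega
          · simp only [ha']; omega
        exact zchain_trans step rest
  have main' : ∀ a b : ℤ × ℤ, a ∈ I → b ∈ I → a ≤ b → ZChain B (ft a) (ft b) := by
    intro a b ha hb hab
    refine main (b.1 - a.1 + (b.2 - a.2)).toNat a b ha hb hab ?_
    rw [Prod.le_def] at hab
    omega
  constructor
  · obtain ⟨a, ha⟩ := hconn.1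
    exact ⟨ft a, hftB a ha⟩
  · intro x hx y hy
    obtain ⟨n, c, hc0, hcn, hmem, hcomp⟩ := hconn.2 x hx.1 y hy.1
    have key : ∀ m ≤ n, ZChain B (ft (c 0)) (ft (c m)) := by
      intro m
      induction m with
      | zero => intro _; exact zchain_refl (hftB _ (hmem 0 (by omega)))
      | succ m ihm =>
        intro hm
        have prev := ihm (by omega)
        have step : ZChain B (ft (c m)) (ft (c (m + 1))) := by
          rcases hcomp m (by omega) with h | h
          · exact main' _ _ (hmem m (by omega)) (hmem (m + 1) hm) h
          · exact zchain_symm (main' _ _ (hmem (m + 1) hm) (hmem m (by omega)) h)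
        exact zchain_trans prev step
    have := key n le_rfl
    rw [hc0, hcn, hfix x hx, hfix y hy] at this
    obtain ⟨n', c', h1, h2, h3, h4⟩ := this
    exact ⟨n', c', h1, h2, h3, h4⟩
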